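/- Let S₀, S₁, …, Sₙ be bounded operators on a complex Hilbert space H and let V be the unilateral forward shift on ℓ²(ℕ). Then ‖Σ_{k=0}^{n} Sₖ‖ ≤ ‖Σ_{k=0}^{n} Sₖ ⊗ V^k‖, where Sₖ ⊗ V^k acts on the Hilbert space tensor product H ⊗ ℓ²(ℕ). -/

import Mathlib

/-- If `T` is the operator `Σ_{k=0}^{N} Sₖ ⊗ V^k` on `H ⊗ ℓ²(ℕ) ≅ ℓ²(ℕ, H)`,
where `V` is the unilateral forward shift, i.e. `(T f)(n) = Σ_{k ≤ n, k ≤ N} Sₖ (f (n - k))`,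
then `‖Σ_{k=0}^{N} Sₖ‖ ≤ ‖T‖`. -/
theorem stmt_2 {H : Type*} [NormedAddCommGroup H] [InnerProductSpace ℂ H]
    [CompleteSpace H] (N : ℕ) (S : ℕ → (H →L[ℂ] H))
    (T : lp (fun _ : ℕ => H) 2 →L[ℂ] lp (fun _ : ℕ => H) 2)
    (hT : ∀ (f : lp (fun _ : ℕ => H) 2) (n : ℕ),
      (T f : ∀ _ : ℕ, H) n =
        ∑ k ∈ Finset.range (N + 1), if k ≤ n then S k ((f : ∀ _ : ℕ, H) (n - k)) else 0) :
    ‖∑ k ∈ Finset.range (N + 1), S k‖ ≤ ‖T‖ := by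
  have hp : 0 < (2 : ENNReal).toReal := by norm_num
  set A := ∑ k ∈ Finset.range (N + 1), S k with hA
  refine ContinuousLinearMap.opNorm_le_bound _ (norm_nonneg T) fun x => ?_
  -- key inequality for each M
  have key : ∀ M : ℕ, (M : ℝ) * ‖A x‖ ^ 2 ≤ (M : ℝ) * (‖T‖ * ‖x‖) ^ 2 + N * ‖A x‖ ^ 2 := by
    intro M
    set f : lp (fun _ : ℕ => H) 2 := ∑ n ∈ Finset.range M, lp.single 2 n x with hf
    have hfc : ∀ n : ℕ, (f : ∀ _ : ℕ, H) n = if n < M then x else 0 := by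
      intro n
      rw [hf, lp.coeFn_sum]
      simp only [Finset.sum_apply, lp.single_apply, Finset.sum_dite_eq, Finset.mem_range, Pi.single_apply,
        Finset.sum_ite_eq, Finset.sum_ite_eq']
    have h2 : ((2 : ENNReal).toReal) = (2:ℝ) := by norm_num
    have hfn : ‖f‖ ^ (2:ℝ) = M * ‖x‖ ^ 2 := by
      have h := lp.norm_sum_single (p := 2) hp (fun _ : ℕ => x) (Finset.range M)
      rw [← hf, h2] at h
      rw [h, Finset.sum_const, Finset.card_range, nsmul_eq_mul, Real.rpow_two]
    -- coordinates of T f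
    have hTf : ∀ n, N ≤ n → n < M → (T f : ∀ _ : ℕ, H) n = A x := by
      intro n hNn hnM
      rw [hT, hA, ContinuousLinearMap.sum_apply]
      refine Finset.sum_congr rfl fun k hk => ?_
      rw [Finset.mem_range] at hk
      have hkn : k ≤ n := le_trans (Nat.lt_succ_iff.mp hk) hNn
      rw [if_pos hkn, hfc, if_pos (lt_of_le_of_lt (Nat.sub_le n k) hnM)]
    -- lower bound on ‖T f‖
    have hlow : ((M : ℝ) - N) * ‖A x‖ ^ 2 ≤ ‖T f‖ ^ (2:ℝ) := by
      rcases le_or_gt M N with hMN | hMN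
      · calc ((M : ℝ) - N) * ‖A x‖ ^ 2 ≤ 0 := by
              apply mul_nonpos_of_nonpos_of_nonneg
              · simp only [sub_nonpos]; exact_mod_cast hMN
              · positivity
          _ ≤ ‖T f‖ ^ (2:ℝ) := Real.rpow_nonneg (norm_nonneg _) _
      · have h1 := lp.sum_rpow_le_norm_rpow hp (T f) (Finset.Ico N M)
        rw [h2] at h1
        refine le_trans (le_of_eq ?_) h1
        have hc : ∀ n ∈ Finset.Ico N M, ‖(T f : ∀ _ : ℕ, H) n‖ ^ (2:ℝ) = ‖A x‖ ^ (2:ℝ) := by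
          intro n hn
          rw [Finset.mem_Ico] at hn
          rw [hTf n hn.1 hn.2]
        rw [Finset.sum_congr rfl hc, Finset.sum_const, Nat.card_Ico, nsmul_eq_mul,
          Real.rpow_two, Nat.cast_sub hMN.le]
    have hup : ‖T f‖ ^ (2:ℝ) ≤ (M : ℝ) * (‖T‖ * ‖x‖) ^ 2 := by
      have h1 : ‖T f‖ ≤ ‖T‖ * ‖f‖ := T.le_opNorm f
      rw [Real.rpow_two]
      calc ‖T f‖ ^ 2 ≤ (‖T‖ * ‖f‖) ^ 2 := by
            apply pow_le_pow_left₀ (norm_nonneg _) h1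
        _ = ‖T‖ ^ 2 * ‖f‖ ^ 2 := by ring
        _ = ‖T‖ ^ 2 * ((M : ℝ) * ‖x‖ ^ 2) := by rw [← Real.rpow_two ‖f‖, hfn]
        _ = (M : ℝ) * (‖T‖ * ‖x‖) ^ 2 := by ring
    nlinarith [le_trans hlow hup]
  -- conclude ‖A x‖ ≤ ‖T‖ * ‖x‖
  have hsq : ‖A x‖ ^ 2 ≤ (‖T‖ * ‖x‖) ^ 2 := by
    by_contra hcon
    push_neg at hcon
    obtain ⟨M, hM⟩ := exists_nat_gt ((N : ℝ) * ‖A x‖ ^ 2 / (‖A x‖ ^ 2 - (‖T‖ * ‖x‖) ^ 2))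
    have hpos : (0:ℝ) < ‖A x‖ ^ 2 - (‖T‖ * ‖x‖) ^ 2 := by linarith
    have := key M
    rw [div_lt_iff₀ hpos] at hM
    nlinarith
  nlinarith [norm_nonneg (A x), mul_nonneg (norm_nonneg T) (norm_nonneg x)]
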